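/- The Irwin–Lancaster basis possesses the GKS property (all triple product sums $\sum_{j=1}^d u_j^{(l)} u_j^{(m)} u_j^{(r)} p_j \ge 0$ for $0 \le l, m, r \le d-1$) if and only if $p$ is strongly monotone: $p_{r+1} + \cdots + p_d \le p_r$ for every $1 \le r \le d-1$. -/

import Mathlib

open Finset

/-- The Irwin–Lancaster basis has the GKS property (all triple product sums
nonnegative) if and only if `p` is strongly monotone. -/
theorem stmt8 (d : ℕ) (hd : 1 ≤ d) (p : ℕ → ℝ) (u : ℕ → ℕ → ℝ)
    (hp : ∀ i ∈ Finset.Icc 1 d, 0 < p i)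
    (hsum : ∑ i ∈ Finset.Icc 1 d, p i = 1)
    (A a : ℕ → ℝ)
    (ha : ∀ i, a i = Real.sqrt (p i))
    (hA : ∀ i, A i = Real.sqrt (∑ j ∈ Finset.Icc i d, p j))
    (hu0 : ∀ j, u 0 j = 1)
    (hu : ∀ l ∈ Finset.Icc 1 (d - 1), ∀ j ∈ Finset.Icc 1 d,
      u l j = if j < l then 0
        else if j = l then -(A (l + 1)) / (a l * A l)
        else a l / (A l * A (l + 1))) :
    (∀ l ∈ Finset.Icc 0 (d - 1), ∀ m ∈ Finset.Icc 0 (d - 1),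
        ∀ r ∈ Finset.Icc 0 (d - 1),
        0 ≤ ∑ j ∈ Finset.Icc 1 d, u l j * u m j * u r j * p j) ↔
      (∀ r ∈ Finset.Icc 1 (d - 1), ∑ i ∈ Finset.Icc (r + 1) d, p i ≤ p r) := by
  have hppos : ∀ i, 1 ≤ i → i ≤ d → 0 < p i := fun i h1 h2 => hp i (mem_Icc.2 ⟨h1, h2⟩)
  have hSpos : ∀ i, 1 ≤ i → i ≤ d → 0 < ∑ j ∈ Icc i d, p j := by
    intro i h1 h2
    refine Finset.sum_pos (fun j hj => ?_) ⟨i, mem_Icc.2 ⟨le_rfl, h2⟩⟩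
    exact hppos j (h1.trans (mem_Icc.1 hj).1) (mem_Icc.1 hj).2
  have hapos : ∀ i, 1 ≤ i → i ≤ d → 0 < a i := fun i h1 h2 => by
    rw [ha]; exact Real.sqrt_pos.2 (hppos i h1 h2)
  have ha2 : ∀ i, 1 ≤ i → i ≤ d → a i ^ 2 = p i := fun i h1 h2 => by
    rw [ha]; exact Real.sq_sqrt (hppos i h1 h2).le
  have hApos : ∀ i, 1 ≤ i → i ≤ d → 0 < A i := fun i h1 h2 => by
    rw [hA]; exact Real.sqrt_pos.2 (hSpos i h1 h2)
  have hA2 : ∀ i, 1 ≤ i → i ≤ d → A i ^ 2 = ∑ j ∈ Icc i d, p j := fun i h1 h2 => by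
    rw [hA]; exact Real.sq_sqrt (hSpos i h1 h2).le
  have hu_diag : ∀ r, 1 ≤ r → r ≤ d - 1 → u r r = -(A (r + 1)) / (a r * A r) := by
    intro r h1 h2
    rw [hu r (mem_Icc.2 ⟨h1, h2⟩) r (mem_Icc.2 ⟨h1, by omega⟩), if_neg (lt_irrefl r),
      if_pos rfl]
  have hu_tail : ∀ l, 1 ≤ l → l ≤ d - 1 → ∀ j, l < j → j ≤ d →
      u l j = a l / (A l * A (l + 1)) := by
    intro l h1 h2 j hj1 hj2
    rw [hu l (mem_Icc.2 ⟨h1, h2⟩) j (mem_Icc.2 ⟨by omega, hj2⟩), if_neg (by omega),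
      if_neg (by omega)]
  have hu_zero : ∀ r, 1 ≤ r → r ≤ d - 1 → ∀ j, 1 ≤ j → j < r → u r j = 0 := by
    intro r h1 h2 j hj1 hj2
    rw [hu r (mem_Icc.2 ⟨h1, h2⟩) j (mem_Icc.2 ⟨hj1, by omega⟩), if_pos hj2]
  -- generic sum computation: if F vanishes below r and is constant above r,
  -- the sum collapses to two terms
  have hgen : ∀ r, 1 ≤ r → r ≤ d → ∀ F : ℕ → ℝ,
      (∀ j, 1 ≤ j → j < r → F j = 0) →
      (∀ j, r < j → j ≤ d → F j = F (r + 1)) →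
      ∑ j ∈ Icc 1 d, F j * p j = F r * p r + F (r + 1) * ∑ j ∈ Icc (r + 1) d, p j := by
    intro r h1 h2 F h0 hc
    have hIoc : Icc (r + 1) d = Ioc r d := by
      ext x; simp only [mem_Icc, mem_Ioc]; omega
    have step1 : ∑ j ∈ Icc 1 d, F j * p j = ∑ j ∈ Icc r d, F j * p j := by
      refine (Finset.sum_subset (Finset.Icc_subset_Icc_left h1) fun j hj hj' => ?_).symm
      have h3 := mem_Icc.1 hj
      have h4 : j < r := by
        by_contra h
        exact hj' (mem_Icc.2 ⟨not_lt.1 h, h3.2⟩)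
      rw [h0 j h3.1 h4, zero_mul]
    have step2 : ∑ j ∈ Icc r d, F j * p j = F r * p r + ∑ j ∈ Ioc r d, F j * p j := by
      rw [← Finset.Ioc_insert_left h2, Finset.sum_insert (by simp)]
    have step3 : ∑ j ∈ Ioc r d, F j * p j = F (r + 1) * ∑ j ∈ Icc (r + 1) d, p j := by
      rw [← hIoc, Finset.mul_sum]
      refine Finset.sum_congr rfl fun j hj => ?_
      have hj' := mem_Icc.1 hj
      rw [hc j (by omega) hj'.2]
    rw [step1, step2, step3]
  -- the basic orthogonality identity
  have hinner0 : ∀ r, 1 ≤ r → r ≤ d - 1 →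
      -(A (r + 1)) / (a r * A r) * p r
        + a r / (A r * A (r + 1)) * ∑ j ∈ Icc (r + 1) d, p j = 0 := by
    intro r h1 h2
    have hx := (hapos r h1 (by omega)).ne'
    have hy := (hApos r h1 (by omega)).ne'
    have hz := (hApos (r + 1) (by omega) (by omega)).ne'
    rw [← ha2 r h1 (by omega), ← hA2 (r + 1) (by omega) (by omega)]
    field_simp
    ring
  -- the value of the l = m = r triple sum
  have Trrr : ∀ r, 1 ≤ r → r ≤ d - 1 →
      ∑ j ∈ Icc 1 d, u r j * u r j * u r j * p j
        = (p r ^ 2 - (∑ i ∈ Icc (r + 1) d, p i) ^ 2) / (a r * A r ^ 3 * A (r + 1)) := by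
    intro r h1 h2
    have hF0 : ∀ j, 1 ≤ j → j < r → u r j * u r j * u r j = 0 := by
      intro j hj1 hj2; rw [hu_zero r h1 h2 j hj1 hj2]; ring
    have hFc : ∀ j, r < j → j ≤ d →
        u r j * u r j * u r j = u r (r + 1) * u r (r + 1) * u r (r + 1) := by
      intro j hj1 hj2
      rw [hu_tail r h1 h2 j hj1 hj2, hu_tail r h1 h2 (r + 1) (by omega) (by omega)]
    have T1 : ∑ j ∈ Icc 1 d, u r j * u r j * u r j * p j
        = u r r * u r r * u r r * p r
          + u r (r + 1) * u r (r + 1) * u r (r + 1) * ∑ j ∈ Icc (r + 1) d, p j :=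
      hgen r h1 (by omega) (fun j => u r j * u r j * u r j) hF0 hFc
    rw [T1, hu_diag r h1 h2, hu_tail r h1 h2 (r + 1) (by omega) (by omega),
      ← ha2 r h1 (by omega), ← hA2 (r + 1) (by omega) (by omega)]
    have hx := (hapos r h1 (by omega)).ne'
    have hy := (hApos r h1 (by omega)).ne'
    have hz := (hApos (r + 1) (by omega) (by omega)).ne'
    field_simp
    ring
  constructor
  · -- GKS implies strong monotonicity
    intro hGKS r hr
    have hr' := mem_Icc.1 hr
    have h1 := hGKS r (mem_Icc.2 ⟨Nat.zero_le _, hr'.2⟩) r (mem_Icc.2 ⟨Nat.zero_le _, hr'.2⟩)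
      r (mem_Icc.2 ⟨Nat.zero_le _, hr'.2⟩)
    rw [Trrr r hr'.1 hr'.2] at h1
    have hD : 0 < a r * A r ^ 3 * A (r + 1) :=
      mul_pos (mul_pos (hapos r hr'.1 (by omega)) (pow_pos (hApos r hr'.1 (by omega)) 3))
        (hApos (r + 1) (by omega) (by omega))
    have hnum : 0 ≤ p r ^ 2 - (∑ i ∈ Icc (r + 1) d, p i) ^ 2 := by
      have h2 := mul_nonneg h1 hD.le
      rwa [div_mul_cancel₀ _ hD.ne'] at h2
    have hQ := hSpos (r + 1) (by omega) (by omega)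
    have hP := hppos r hr'.1 (by omega)
    nlinarith
  · -- strong monotonicity implies GKS
    intro hmono
    -- key: the inequality holds for sorted triples
    have key : ∀ l m r : ℕ, l ≤ m → m ≤ r → r ≤ d - 1 →
        0 ≤ ∑ j ∈ Icc 1 d, u l j * u m j * u r j * p j := by
      intro l m r hlm hmr hr2
      rcases Nat.eq_zero_or_pos r with hr0 | hr1
      · have hl0 : l = 0 := by omega
        have hm0 : m = 0 := by omega
        subst hr0; subst hl0; subst hm0
        simp only [hu0, one_mul]
        rw [hsum]
        exact zero_le_one
      · -- r ≥ 1
        have hrd : r ≤ d := by omega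
        have hconst : ∀ t, t ≤ r → ∀ j, r < j → j ≤ d → u t j = u t (r + 1) := by
          intro t ht j hj1 hj2
          rcases Nat.eq_zero_or_pos t with h | h
          · subst h; rw [hu0, hu0]
          · rw [hu_tail t h (by omega) j (by omega) hj2,
              hu_tail t h (by omega) (r + 1) (by omega) (by omega)]
        have hconst2 : ∀ t, t < r → u t r = u t (r + 1) := by
          intro t ht
          rcases Nat.eq_zero_or_pos t with h | h
          · subst h; rw [hu0, hu0]
          · rw [hu_tail t h (by omega) r ht hrd,
              hu_tail t h (by omega) (r + 1) (by omega) (by omega)]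
        have hF0 : ∀ j, 1 ≤ j → j < r → u l j * u m j * u r j = 0 := by
          intro j hj1 hj2; rw [hu_zero r hr1 hr2 j hj1 hj2, mul_zero]
        have hFc : ∀ j, r < j → j ≤ d →
            u l j * u m j * u r j = u l (r + 1) * u m (r + 1) * u r (r + 1) := by
          intro j hj1 hj2
          rw [hconst l (hlm.trans hmr) j hj1 hj2, hconst m hmr j hj1 hj2,
            hconst r le_rfl j hj1 hj2]
        rcases eq_or_lt_of_le hmr with hmeq | hmlt
        · rcases eq_or_lt_of_le hlm with hleq | hllt
          · -- l = m = r
            subst hmeq; subst hleq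
            rw [Trrr l hr1 hr2]
            apply div_nonneg
            · have h1 := hmono l (mem_Icc.2 ⟨hr1, hr2⟩)
              have h2 := hSpos (l + 1) (by omega) (by omega)
              nlinarith
            · exact (mul_pos (mul_pos (hapos l hr1 (by omega))
                (pow_pos (hApos l hr1 (by omega)) 3))
                (hApos (l + 1) (by omega) (by omega))).le
          · -- l < m = r
            subst hmeq
            have T1 : ∑ j ∈ Icc 1 d, u l j * u m j * u m j * p j
                = u l m * u m m * u m m * p m
                  + u l (m + 1) * u m (m + 1) * u m (m + 1) * ∑ j ∈ Icc (m + 1) d, p j :=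
              hgen m hr1 hrd (fun j => u l j * u m j * u m j) hF0 hFc
            rw [T1, hconst2 l hllt, hu_diag m hr1 hr2,
              hu_tail m hr1 hr2 (m + 1) (by omega) (by omega)]
            have hC : 0 < u l (m + 1) := by
              rcases Nat.eq_zero_or_pos l with h | h
              · subst h; rw [hu0]; exact one_pos
              · rw [hu_tail l h (by omega) (m + 1) (by omega) (by omega)]
                exact div_pos (hapos l h (by omega))
                  (mul_pos (hApos l h (by omega)) (hApos (l + 1) (by omega) (by omega)))
            have hP := (hppos m hr1 hrd).le
            have hQ := (hSpos (m + 1) (by omega) (by omega)).le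
            have hrw : u l (m + 1) * (-(A (m + 1)) / (a m * A m))
                  * (-(A (m + 1)) / (a m * A m)) * p m
                + u l (m + 1) * (a m / (A m * A (m + 1)))
                  * (a m / (A m * A (m + 1))) * ∑ j ∈ Icc (m + 1) d, p j
                = u l (m + 1) * ((A (m + 1) / (a m * A m)) ^ 2 * p m
                  + (a m / (A m * A (m + 1))) ^ 2 * ∑ j ∈ Icc (m + 1) d, p j) := by
              ring
            rw [hrw]
            exact mul_nonneg hC.le (add_nonneg (mul_nonneg (sq_nonneg _) hP)
              (mul_nonneg (sq_nonneg _) hQ))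
        · -- m < r
          have T1 : ∑ j ∈ Icc 1 d, u l j * u m j * u r j * p j
              = u l r * u m r * u r r * p r
                + u l (r + 1) * u m (r + 1) * u r (r + 1) * ∑ j ∈ Icc (r + 1) d, p j :=
            hgen r hr1 hrd (fun j => u l j * u m j * u r j) hF0 hFc
          rw [T1, hconst2 l (lt_of_le_of_lt hlm hmlt), hconst2 m hmlt,
            hu_diag r hr1 hr2, hu_tail r hr1 hr2 (r + 1) (by omega) (by omega)]
          have h0 := hinner0 r hr1 hr2
          have hz : u l (r + 1) * u m (r + 1) * (-(A (r + 1)) / (a r * A r)) * p r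
              + u l (r + 1) * u m (r + 1) * (a r / (A r * A (r + 1)))
                * ∑ j ∈ Icc (r + 1) d, p j = 0 := by
            linear_combination (u l (r + 1) * u m (r + 1)) * h0
          exact hz.ge
    -- dispatch arbitrary triples to sorted ones
    intro l hl m hm r hr
    have hl' := (mem_Icc.1 hl).2
    have hm' := (mem_Icc.1 hm).2
    have hr' := (mem_Icc.1 hr).2
    rcases le_total l m with h1 | h1
    · rcases le_total m r with h2 | h2
      · exact key l m r h1 h2 hr'
      · rcases le_total l r with h3 | h3
        · have e : ∑ j ∈ Icc 1 d, u l j * u m j * u r j * p j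
              = ∑ j ∈ Icc 1 d, u l j * u r j * u m j * p j :=
            Finset.sum_congr rfl fun j _ => by ring
          rw [e]; exact key l r m h3 h2 hm'
        · have e : ∑ j ∈ Icc 1 d, u l j * u m j * u r j * p j
              = ∑ j ∈ Icc 1 d, u r j * u l j * u m j * p j :=
            Finset.sum_congr rfl fun j _ => by ring
          rw [e]; exact key r l m h3 h1 hm'
    · rcases le_total l r with h3 | h3
      · have e : ∑ j ∈ Icc 1 d, u l j * u m j * u r j * p j
            = ∑ j ∈ Icc 1 d, u m j * u l j * u r j * p j :=
          Finset.sum_congr rfl fun j _ => by ring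
        rw [e]; exact key m l r h1 h3 hr'
      · rcases le_total m r with h2 | h2
        · have e : ∑ j ∈ Icc 1 d, u l j * u m j * u r j * p j
              = ∑ j ∈ Icc 1 d, u m j * u r j * u l j * p j :=
            Finset.sum_congr rfl fun j _ => by ring
          rw [e]; exact key m r l h2 h3 hl'
        · have e : ∑ j ∈ Icc 1 d, u l j * u m j * u r j * p j
              = ∑ j ∈ Icc 1 d, u r j * u m j * u l j * p j :=
            Finset.sum_congr rfl fun j _ => by ring
          rw [e]; exact key r m l h2 h1 hl'
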